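/- For a poset-causal system Σ_P ∼ (A,B,C,D), the reachable subspace of the global pair (A,B) equals the sum over i ∈ P of the embeddings into the global state space of the i-downstream reachable subspaces: R(A,B) = Σ_{i∈P} I_n(:,↓i) R_i, where R_i = R(A(↓i,↓i), B(↓i,i)). -/

import Mathlib

open Matrix

attribute [local instance] Classical.propDecidable

/-- Block index type for a partition `n` over the index set `P`. -/
abbrev BIdx {P : Type*} (n : P → ℕ) : Type _ := (i : P) × Fin (n i)

variable {P : Type*} [Fintype P] [DecidableEq P]

/-- The embedding matrix `I_n(:,S)` of `ℝ^{n_S}` into `ℝ^{n}`. -/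
noncomputable def embMat (n : P → ℕ) (S : Set P) :
    Matrix (BIdx n) {a : BIdx n // a.1 ∈ S} ℝ :=
  Matrix.of fun p q => if p = (q : BIdx n) then 1 else 0

/-- The matrix of the orthogonal projection onto the coordinate subspace of block indices in `S`. -/
noncomputable def projMat (n : P → ℕ) (S : Set P) : Matrix (BIdx n) (BIdx n) ℝ :=
  Matrix.of fun p q => if p = q ∧ p.1 ∈ S then 1 else 0

/-- Downstream set `↓S = {i | ∃ j ∈ S, j ⪰ i}` (where `j ⪰ i` is encoded as `le i j`). -/
def downSet (le : P → P → Prop) (S : Set P) : Set P := {i | ∃ j ∈ S, le i j}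

/-- Upstream set `↑S = {i | ∃ j ∈ S, i ⪰ j}`. -/
def upSet (le : P → P → Prop) (S : Set P) : Set P := {i | ∃ j ∈ S, le j i}

/-- Membership of a block matrix in the block incidence space: `G_{ab} = 0` whenever `b ⋡ a`. -/
def Inc (le : P → P → Prop) {n m : P → ℕ} (G : Matrix (BIdx n) (BIdx m) ℝ) : Prop :=
  ∀ a b, ¬ le a.1 b.1 → G a b = 0

/-- Block compression `G(Q,S)` of a block matrix to block rows in `Q` and block columns in `S`. -/
def bcmp {n m : P → ℕ} (G : Matrix (BIdx n) (BIdx m) ℝ) (Q S : Set P) :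
    Matrix {a : BIdx n // a.1 ∈ Q} {a : BIdx m // a.1 ∈ S} ℝ :=
  G.submatrix Subtype.val Subtype.val

/-- The reachable subspace `R(A,B) = im [B, AB, ..., A^{n-1}B]`. -/
noncomputable def reach {ι κ : Type*} [Fintype ι] [Fintype κ] [DecidableEq ι]
    (A : Matrix ι ι ℝ) (B : Matrix ι κ ℝ) : Submodule ℝ (ι → ℝ) :=
  ⨆ k : Fin (Fintype.card ι), LinearMap.range ((A ^ (k : ℕ) * B).mulVecLin)

/-- The unobservable subspace `N(C,A) = ker [C; CA; ...; CA^{n-1}]`. -/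
noncomputable def unobs {ι κ : Type*} [Fintype ι] [Fintype κ] [DecidableEq ι]
    (C : Matrix κ ι ℝ) (A : Matrix ι ι ℝ) : Submodule ℝ (ι → ℝ) :=
  ⨅ k : Fin (Fintype.card ι), LinearMap.ker ((C * A ^ (k : ℕ)).mulVecLin)

/-- The reachable subspace, inside Euclidean space. -/
noncomputable def reachE {ι κ : Type*} [Fintype ι] [Fintype κ] [DecidableEq ι] [DecidableEq κ]
    (A : Matrix ι ι ℝ) (B : Matrix ι κ ℝ) : Submodule ℝ (EuclideanSpace ℝ ι) :=
  ⨆ k : Fin (Fintype.card ι), LinearMap.range (Matrix.toEuclideanLin (A ^ (k : ℕ) * B))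

/-- The unobservable subspace, inside Euclidean space. -/
noncomputable def unobsE {ι κ : Type*} [Fintype ι] [Fintype κ] [DecidableEq ι] [DecidableEq κ]
    (C : Matrix κ ι ℝ) (A : Matrix ι ι ℝ) : Submodule ℝ (EuclideanSpace ℝ ι) :=
  ⨅ k : Fin (Fintype.card ι), LinearMap.ker (Matrix.toEuclideanLin (C * A ^ (k : ℕ)))

/-- The coordinate subspace `X_S = ⊕_{j ∈ S} X_j` of the global state space. -/
noncomputable def coordSub (n : P → ℕ) (S : Set P) : Submodule ℝ (BIdx n → ℝ) :=
  LinearMap.range (projMat n S).mulVecLin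

/-- The coordinate subspace `X_S`, inside Euclidean space. -/
noncomputable def coordE (n : P → ℕ) (S : Set P) : Submodule ℝ (EuclideanSpace ℝ (BIdx n)) :=
  LinearMap.range (Matrix.toEuclideanLin (projMat n S))

/-- The `i`-downstream reachable set `R_i = R(A(↓i,↓i), B(↓i,i))`, embedded into the
global state space via `I_n(:,↓i)`. -/
noncomputable def Ri (le : P → P → Prop) {n m : P → ℕ}
    (A : Matrix (BIdx n) (BIdx n) ℝ) (B : Matrix (BIdx n) (BIdx m) ℝ) (i : P) :
    Submodule ℝ (BIdx n → ℝ) :=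
  Submodule.map (embMat n (downSet le {i})).mulVecLin
    (reach (bcmp A (downSet le {i}) (downSet le {i})) (bcmp B (downSet le {i}) {i}))

/-- The `i`-downstream reachable set, inside Euclidean space. -/
noncomputable def RiE (le : P → P → Prop) {n m : P → ℕ}
    (A : Matrix (BIdx n) (BIdx n) ℝ) (B : Matrix (BIdx n) (BIdx m) ℝ) (i : P) :
    Submodule ℝ (EuclideanSpace ℝ (BIdx n)) :=
  Submodule.map (Matrix.toEuclideanLin (embMat n (downSet le {i})))
    (reachE (bcmp A (downSet le {i}) (downSet le {i})) (bcmp B (downSet le {i}) {i}))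

/-- The `i`-upstream indistinguishable set `N_i = N(C(i,↑i), A(↑i,↑i))`, embedded into the
global state space via `I_n(:,↑i)`. -/
noncomputable def Ni (le : P → P → Prop) {n r : P → ℕ}
    (C : Matrix (BIdx r) (BIdx n) ℝ) (A : Matrix (BIdx n) (BIdx n) ℝ) (i : P) :
    Submodule ℝ (BIdx n → ℝ) :=
  Submodule.map (embMat n (upSet le {i})).mulVecLin
    (unobs (bcmp C {i} (upSet le {i})) (bcmp A (upSet le {i}) (upSet le {i})))

/-- The `i`-upstream indistinguishable set, inside Euclidean space. -/
noncomputable def NiE (le : P → P → Prop) {n r : P → ℕ}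
    (C : Matrix (BIdx r) (BIdx n) ℝ) (A : Matrix (BIdx n) (BIdx n) ℝ) (i : P) :
    Submodule ℝ (EuclideanSpace ℝ (BIdx n)) :=
  Submodule.map (Matrix.toEuclideanLin (embMat n (upSet le {i})))
    (unobsE (bcmp C {i} (upSet le {i})) (bcmp A (upSet le {i}) (upSet le {i})))



section Aux

open Polynomial

/-- Any power range is inside the reachable subspace (via Cayley–Hamilton). -/
lemma range_pow_mul_le {ι κ : Type*} [Fintype ι] [Fintype κ] [DecidableEq ι]
    (A : Matrix ι ι ℝ) (B : Matrix ι κ ℝ) (k : ℕ) :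
    LinearMap.range ((A ^ k * B).mulVecLin) ≤ reach A B := by
  cases isEmpty_or_nonempty ι with
  | inl h =>
    intro x _
    have hx : x = 0 := funext fun i => h.elim i
    simp [hx]
  | inr h =>
    have hN0 : 0 < Fintype.card ι := Fintype.card_pos
    set p := X ^ k %ₘ A.charpoly with hp
    have hdeg : p.natDegree < Fintype.card ι := by
      have hlt : p.degree < A.charpoly.degree :=
        degree_modByMonic_lt _ A.charpoly_monic
      rw [A.charpoly_degree_eq_dim] at hlt
      rcases eq_or_ne p 0 with h0 | h0
      · simpa [h0] using hN0
      · exact (natDegree_lt_iff_degree_lt h0).2 hlt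
    have hAk : A ^ k * B =
        ∑ j ∈ Finset.range (Fintype.card ι), p.coeff j • (A ^ j * B) := by
      rw [Matrix.pow_eq_aeval_mod_charpoly, ← hp, aeval_eq_sum_range' hdeg,
        Matrix.sum_mul]
      simp [smul_mul_assoc]
    have hsum : ∀ (s : Finset ℕ) (M : ℕ → Matrix ι κ ℝ) (v : κ → ℝ),
        (∑ j ∈ s, M j).mulVec v = ∑ j ∈ s, (M j).mulVec v := by
      intro s M v
      induction s using Finset.induction_on with
      | empty => simp
      | insert _ _ hni ih => simp [Finset.sum_insert hni, Matrix.add_mulVec, ih]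
    rintro x ⟨v, rfl⟩
    simp only [Matrix.mulVecLin_apply, hAk, hsum]
    apply Submodule.sum_mem
    intro j hj
    rw [Matrix.smul_mulVec]
    apply Submodule.smul_mem
    have hle : LinearMap.range ((A ^ j * B).mulVecLin) ≤ reach A B :=
      le_iSup (fun kk : Fin (Fintype.card ι) =>
        LinearMap.range ((A ^ (kk : ℕ) * B).mulVecLin)) ⟨j, Finset.mem_range.1 hj⟩
    exact hle ⟨v, rfl⟩

variable {P : Type*} [Fintype P] [DecidableEq P]

/-- Commutation of a matrix in a zero pattern with the embedding. -/
lemma mul_embMat_eq {n m : P → ℕ} (G : Matrix (BIdx n) (BIdx m) ℝ) (Q S : Set P)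
    [Fintype {a : BIdx n // a.1 ∈ Q}]
    (h : ∀ (a : BIdx n) (b : BIdx m), a.1 ∉ Q → b.1 ∈ S → G a b = 0) :
    G * embMat m S = embMat n Q * bcmp G Q S := by
  classical
  ext a c
  rw [Matrix.mul_apply, Matrix.mul_apply]
  have hL : ∑ b, G a b * embMat m S b c = G a (c : BIdx m) := by
    simp [embMat, mul_ite, Finset.sum_ite_eq]
  rw [hL]
  by_cases ha : a.1 ∈ Q
  · have key : ∀ b : {x : BIdx n // x.1 ∈ Q},
        embMat n Q a b * bcmp G Q S b c
          = if b = ⟨a, ha⟩ then G a (c : BIdx m) else 0 := by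
      intro b
      simp only [embMat, bcmp, Matrix.of_apply, Matrix.submatrix_apply]
      by_cases hb : b = ⟨a, ha⟩
      · subst hb; simp
      · have : a ≠ (b : BIdx n) := by
          intro hab
          exact hb (Subtype.ext hab.symm)
        simp [this, hb]
    rw [Finset.sum_congr rfl fun b _ => key b]
    simp
  · have hz : G a (c : BIdx m) = 0 := h a c ha c.2
    rw [hz]
    symm
    apply Finset.sum_eq_zero
    intro b _
    have : a ≠ (b : BIdx n) := by
      intro hab
      exact ha (hab ▸ b.2)
    simp [embMat, this]

/-- `projMat` over a singleton factors through the embedding. -/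
lemma projMat_eq_emb_mul {n : P → ℕ} (S : Set P) [Fintype {a : BIdx n // a.1 ∈ S}] :
    projMat n S = embMat n S * (embMat n S)ᵀ := by
  classical
  ext p q
  rw [Matrix.mul_apply]
  by_cases h : p = q ∧ p.1 ∈ S
  · obtain ⟨rfl, hp⟩ := h
    have key : ∀ b : {x : BIdx n // x.1 ∈ S},
        embMat n S p b * (embMat n S)ᵀ b p
          = if b = ⟨p, hp⟩ then 1 else 0 := by
      intro b
      simp only [embMat, Matrix.of_apply, Matrix.transpose_apply]
      by_cases hb : b = ⟨p, hp⟩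
      · subst hb; simp
      · have : p ≠ (b : BIdx n) := fun hab => hb (Subtype.ext hab.symm)
        simp [this, hb]
    rw [Finset.sum_congr rfl fun b _ => key b]
    simp [projMat, hp]
  · have hz : ∀ b : {x : BIdx n // x.1 ∈ S},
        embMat n S p b * (embMat n S)ᵀ b q = 0 := by
      intro b
      simp only [embMat, Matrix.of_apply, Matrix.transpose_apply]
      by_cases hpb : p = (b : BIdx n)
      · by_cases hqb : q = (b : BIdx n)
        · exfalso
          exact h ⟨hpb.trans hqb.symm, hpb ▸ b.2⟩
        · simp [hqb]
      · simp [hpb]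
    rw [Finset.sum_congr rfl fun b _ => hz b]
    simp [projMat, h]

/-- The identity decomposes as sum of block projections. -/
lemma sum_projMat_eq_one {n : P → ℕ} :
    ∑ i : P, projMat n ({i} : Set P) = (1 : Matrix (BIdx n) (BIdx n) ℝ) := by
  classical
  ext p q
  rw [Matrix.sum_apply]
  by_cases h : p = q
  · subst h
    have key : ∀ i : P, projMat n ({i} : Set P) p p = if i = p.1 then 1 else 0 := by
      intro i
      simp only [projMat, Matrix.of_apply, Set.mem_singleton_iff]
      by_cases hi : i = p.1 <;> simp [hi, eq_comm]
    rw [Finset.sum_congr rfl fun i _ => key i]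
    simp
  · have key : ∀ i : P, projMat n ({i} : Set P) p q = 0 := by
      intro i; simp [projMat, h]
    rw [Finset.sum_congr rfl fun i _ => key i]
    simp [Matrix.one_apply, h]

end Aux

/-- For a poset-causal system `Σ_P ∼ (A,B,C,D)`, the reachable subspace of the global pair
`(A,B)` equals the sum over `i ∈ P` of the embeddings into the global state space of the
`i`-downstream reachable subspaces: `R(A,B) = Σ_{i∈P} I_n(:,↓i) R_i`. -/
theorem reach_eq_sup_downstream [PartialOrder P] (n m : P → ℕ)
    (A : Matrix (BIdx n) (BIdx n) ℝ) (B : Matrix (BIdx n) (BIdx m) ℝ)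
    (hA : Inc (· ≤ ·) A) (hB : Inc (· ≤ ·) B) :
    reach A B = ⨆ i : P, Ri (· ≤ ·) A B i := by
  classical
  -- notation
  have hAE : ∀ i : P, A * embMat n (downSet (· ≤ ·) {i})
      = embMat n (downSet (· ≤ ·) {i})
        * bcmp A (downSet (· ≤ ·) {i}) (downSet (· ≤ ·) {i}) := by
    intro i
    apply mul_embMat_eq
    intro a b ha hb
    apply hA
    intro hab
    obtain ⟨j, hj, hbj⟩ := hb
    rw [Set.mem_singleton_iff] at hj
    subst hj
    exact ha ⟨j, rfl, le_trans hab hbj⟩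
  have hBE : ∀ i : P, B * embMat m ({i} : Set P)
      = embMat n (downSet (· ≤ ·) {i}) * bcmp B (downSet (· ≤ ·) {i}) {i} := by
    intro i
    apply mul_embMat_eq
    intro a b ha hb
    apply hB
    intro hab
    rw [Set.mem_singleton_iff] at hb
    exact ha ⟨i, rfl, hb ▸ hab⟩
  have hcomm : ∀ (i : P) (k : ℕ),
      A ^ k * B * embMat m ({i} : Set P)
        = embMat n (downSet (· ≤ ·) {i})
            * (bcmp A (downSet (· ≤ ·) {i}) (downSet (· ≤ ·) {i}) ^ k
               * bcmp B (downSet (· ≤ ·) {i}) {i}) := by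
    intro i k
    induction k with
    | zero => simpa using hBE i
    | succ k ih =>
      have h1 : A ^ (k + 1) * B * embMat m ({i} : Set P)
          = A * (A ^ k * B * embMat m ({i} : Set P)) := by
        simp only [pow_succ', Matrix.mul_assoc]
      rw [h1, ih, ← Matrix.mul_assoc, hAE i, Matrix.mul_assoc,
        ← Matrix.mul_assoc (bcmp A (downSet (· ≤ ·) {i}) (downSet (· ≤ ·) {i})),
        ← pow_succ']
  apply le_antisymm
  · -- reach ≤ ⨆ Ri
    apply iSup_le
    intro k
    have hdec : A ^ (k : ℕ) * B
        = ∑ i : P, A ^ (k : ℕ) * B * projMat m ({i} : Set P) := by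
      rw [← Matrix.mul_sum, sum_projMat_eq_one, Matrix.mul_one]
    rw [hdec]
    have hsum : ∀ (s : Finset P) (M : P → Matrix (BIdx n) (BIdx m) ℝ) (v : BIdx m → ℝ),
        (∑ j ∈ s, M j).mulVec v = ∑ j ∈ s, (M j).mulVec v := by
      intro s M v
      induction s using Finset.induction_on with
      | empty => simp
      | insert _ _ hni ih => simp [Finset.sum_insert hni, Matrix.add_mulVec, ih]
    rintro x ⟨v, rfl⟩
    simp only [Matrix.mulVecLin_apply, hsum]
    apply Submodule.sum_mem
    intro i _
    apply Submodule.mem_iSup_of_mem i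
    rw [projMat_eq_emb_mul, ← Matrix.mul_assoc, hcomm i (k : ℕ), Matrix.mul_assoc,
      ← Matrix.mulVec_mulVec, ← Matrix.mulVec_mulVec]
    exact Submodule.mem_map.2
      ⟨_, range_pow_mul_le _ _ (k : ℕ) (LinearMap.mem_range.2 ⟨_, rfl⟩), rfl⟩
  · -- ⨆ Ri ≤ reach
    apply iSup_le
    intro i
    rw [Ri, reach, Submodule.map_iSup]
    apply iSup_le
    intro k
    rw [← LinearMap.range_comp, ← Matrix.mulVecLin_mul, ← hcomm i (k : ℕ)]
    calc LinearMap.range (A ^ (k : ℕ) * B * embMat m ({i} : Set P)).mulVecLin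
        ≤ LinearMap.range (A ^ (k : ℕ) * B).mulVecLin := by
          rw [Matrix.mulVecLin_mul]
          exact LinearMap.range_comp_le_range _ _
      _ ≤ reach A B := range_pow_mul_le A B (k : ℕ)
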